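/- Let a ∈ ℝ and let g : ℝ → ℂ be continuous with compact support. Then lim_{ε → 0⁺} ∫_{−∞}^{∞} g(v) · Σ_{σ ∈ {−1,+1}} σ · e^{v} / ( e^{v} − e^{a} − i σ ε ) dv = 2π i · g(a). -/

import Mathlib

open Filter Real MeasureTheory

theorem sokhotski_plemelj_delta
    (a : ℝ) (g : ℝ → ℂ) (hg : Continuous g) (hsupp : HasCompactSupport g) :
    Filter.Tendsto
      (fun ε : ℝ => ∫ v : ℝ, g v *
        ∑ σ ∈ ({-1, 1} : Finset ℝ),
          (σ : ℂ) * Real.exp v /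
            ((Real.exp v : ℂ) - (Real.exp a : ℂ) - Complex.I * σ * ε))
      (nhdsWithin 0 (Set.Ioi 0))
      (nhds (2 * Real.pi * Complex.I * g a)) := by
  set b : ℝ := Real.exp a with hb_def
  have hb : 0 < b := Real.exp_pos a
  set G : ℝ → ℂ := fun u => (2 * Real.pi * Complex.I) * g (Real.log u) with hG
  set φ : ℝ → ℝ → ℝ := fun ε u => (Real.pi)⁻¹ * (ε / ((u - b) ^ 2 + ε ^ 2)) with hφ
  have hπ : (0 : ℝ) < Real.pi := Real.pi_pos
  -- pointwise identity
  have point : ∀ ε : ℝ, 0 < ε → ∀ x : ℝ, 0 < x → ∀ z : ℂ,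
      z * ∑ σ ∈ ({-1, 1} : Finset ℝ),
          (σ : ℂ) * x / ((x : ℂ) - (b : ℂ) - Complex.I * σ * ε)
      = (x * φ ε x) • ((2 * Real.pi * Complex.I) * z) := by
    intro ε hε x hx z
    have h1 : ((x : ℂ) - b + Complex.I * ε) ≠ 0 := by
      intro h
      have := congrArg Complex.im h
      simp at this
      exact hε.ne' this
    have h2 : ((x : ℂ) - b - Complex.I * ε) ≠ 0 := by
      intro h
      have := congrArg Complex.im h
      simp at this
      exact hε.ne' this
    have hd : ((x - b) ^ 2 + ε ^ 2 : ℝ) ≠ 0 := by positivity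
    have hdC : (((x : ℂ) - b) ^ 2 + (ε : ℂ) ^ 2) ≠ 0 := by
      have : ((x : ℂ) - b) ^ 2 + (ε : ℂ) ^ 2 = (((x - b) ^ 2 + ε ^ 2 : ℝ) : ℂ) := by
        push_cast; ring
      rw [this]
      exact_mod_cast Complex.ofReal_ne_zero.2 hd
    rw [Finset.sum_pair (by norm_num : (-1 : ℝ) ≠ 1)]
    have e1 : ((x : ℂ) - b - Complex.I * ((-1 : ℝ) : ℂ) * ε) = (x : ℂ) - b + Complex.I * ε := by
      push_cast; ring
    have e2 : ((x : ℂ) - b - Complex.I * ((1 : ℝ) : ℂ) * ε) = (x : ℂ) - b - Complex.I * ε := by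
      push_cast; ring
    rw [e1, e2]
    have step1 : z * (((-1 : ℝ) : ℂ) * x / ((x : ℂ) - b + Complex.I * ε)
          + ((1 : ℝ) : ℂ) * x / ((x : ℂ) - b - Complex.I * ε))
        = ((ε * x / ((x - b) ^ 2 + ε ^ 2) : ℝ) : ℂ) * (2 * Complex.I * z) := by
      push_cast
      field_simp
      ring_nf
      have hI3 : Complex.I ^ 3 = -Complex.I := by
        rw [pow_succ, Complex.I_sq]; ring
      rw [hI3]
      ring
    rw [step1, Complex.real_smul]
    have hsc : (x * φ ε x : ℝ) = (ε * x / ((x - b) ^ 2 + ε ^ 2)) / Real.pi := by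
      rw [hφ]; field_simp
    rw [hsc, Complex.ofReal_div]
    have hπC : ((Real.pi : ℝ) : ℂ) ≠ 0 := Complex.ofReal_ne_zero.2 Real.pi_ne_zero
    push_cast
    field_simp
  -- change of variables: the integral equals a peak-function integral on (0, ∞)
  have key : ∀ ε : ℝ, 0 < ε →
      (∫ v : ℝ, g v * ∑ σ ∈ ({-1, 1} : Finset ℝ),
          (σ : ℂ) * Real.exp v / ((Real.exp v : ℂ) - (b : ℂ) - Complex.I * σ * ε))
      = ∫ u in Set.Ioi (0 : ℝ), φ ε u • G u := by
    intro ε hε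
    have cov : ∫ u in Real.exp '' Set.univ, (fun u => φ ε u • G u) u
        = ∫ v in Set.univ, |Real.exp v| • (fun u => φ ε u • G u) (Real.exp v) :=
      integral_image_eq_integral_abs_deriv_smul MeasurableSet.univ
        (fun x _ => (Real.hasDerivAt_exp x).hasDerivWithinAt)
        (Real.exp_injective.injOn) _
    rw [Set.image_univ, Real.range_exp] at cov
    rw [cov, MeasureTheory.setIntegral_univ]
    congr 1
    funext v
    have hxe : (0 : ℝ) < Real.exp v := Real.exp_pos v
    rw [point ε hε (Real.exp v) hxe (g v), hG]
    simp only [Real.log_exp, abs_of_pos hxe, smul_smul]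
  -- ∫ of the peak over the window Ioo (b/2) (3b/2)
  have hiφ : Tendsto (fun ε : ℝ => ∫ u in Set.Ioo (b / 2) (3 * b / 2), φ ε u)
      (nhdsWithin 0 (Set.Ioi 0)) (nhds 1) := by
    have comp : ∀ ε : ℝ, 0 < ε → (∫ u in Set.Ioo (b / 2) (3 * b / 2), φ ε u)
        = Real.pi⁻¹ * (2 * Real.arctan (b / (2 * ε))) := by
      intro ε hε
      have hle : b / 2 ≤ 3 * b / 2 := by linarith
      rw [← MeasureTheory.integral_Ioc_eq_integral_Ioo, ← intervalIntegral.integral_of_le hle]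
      have hfun : ∀ u : ℝ, φ ε u = Real.pi⁻¹ * (ε⁻¹ * (1 + ((u - b) / ε) ^ 2)⁻¹) := by
        intro u
        rw [hφ]
        congr 1
        rw [div_pow]
        rw [eq_comm]
        field_simp
        ring
      simp only [hfun]
      rw [intervalIntegral.integral_const_mul, intervalIntegral.integral_const_mul]
      have hc1 : (∫ u in (b / 2)..(3 * b / 2), (1 + ((u - b) / ε) ^ 2)⁻¹)
          = ∫ u in (b / 2 - b)..(3 * b / 2 - b), (1 + (u / ε) ^ 2)⁻¹ :=
        intervalIntegral.integral_comp_sub_right (fun y => (1 + (y / ε) ^ 2)⁻¹) b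
      rw [hc1]
      rw [intervalIntegral.integral_comp_div (fun y => (1 + y ^ 2)⁻¹) hε.ne']
      rw [integral_inv_one_add_sq]
      have e3 : (3 * b / 2 - b) / ε = b / (2 * ε) := by field_simp; ring
      have e4 : (b / 2 - b) / ε = -(b / (2 * ε)) := by field_simp; ring
      rw [e3, e4, Real.arctan_neg]
      rw [smul_eq_mul]
      field_simp
      ring
    have lim1 : Tendsto (fun ε : ℝ => b / (2 * ε)) (nhdsWithin 0 (Set.Ioi 0)) atTop := by
      have heq : (fun ε : ℝ => b / (2 * ε)) = fun ε : ℝ => (b / 2) * ε⁻¹ := by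
        funext ε
        rw [div_mul_eq_div_div]
        ring
      rw [heq]
      exact Tendsto.const_mul_atTop (by linarith) tendsto_inv_nhdsGT_zero
    have lim2 : Tendsto (fun ε : ℝ => Real.pi⁻¹ * (2 * Real.arctan (b / (2 * ε))))
        (nhdsWithin 0 (Set.Ioi 0)) (nhds (Real.pi⁻¹ * (2 * (Real.pi / 2)))) :=
      tendsto_const_nhds.mul (tendsto_const_nhds.mul
        ((Real.tendsto_arctan_atTop.mono_right nhdsWithin_le_nhds).comp lim1))
    have hone : Real.pi⁻¹ * (2 * (Real.pi / 2)) = 1 := by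
      field_simp
    rw [hone] at lim2
    apply lim2.congr'
    filter_upwards [self_mem_nhdsWithin] with ε hε
    exact (comp ε hε).symm
  -- uniform smallness away from b
  have hlφ : ∀ u : Set ℝ, IsOpen u → b ∈ u →
      TendstoUniformlyOn φ 0 (nhdsWithin 0 (Set.Ioi 0)) (Set.Ioi 0 \ u) := by
    intro u hu hbu
    obtain ⟨δ, δpos, hδ⟩ := Metric.isOpen_iff.1 hu b hbu
    rw [Metric.tendstoUniformlyOn_iff]
    intro η ηpos
    have hmem : Set.Ioo (0 : ℝ) (η * (Real.pi * δ ^ 2)) ∈ nhdsWithin 0 (Set.Ioi 0) :=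
      Ioo_mem_nhdsGT_of_mem (Set.left_mem_Ico.2 (by positivity))
    filter_upwards [hmem] with ε hε x hx
    have hε0 : 0 < ε := hε.1
    have hxd : δ ≤ |x - b| := by
      by_contra h
      push_neg at h
      exact hx.2 (hδ (by rwa [Metric.mem_ball, Real.dist_eq]))
    have hφnn : 0 ≤ φ ε x := by
      rw [hφ]
      positivity
    have hsq : δ ^ 2 ≤ (x - b) ^ 2 := by
      rw [← sq_abs (x - b)]
      exact pow_le_pow_left₀ δpos.le hxd 2
    have hbound : φ ε x ≤ ε / (Real.pi * δ ^ 2) := by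
      have heq2 : φ ε x = ε / (Real.pi * ((x - b) ^ 2 + ε ^ 2)) := by
        rw [hφ]
        field_simp
      rw [heq2]
      gcongr
      nlinarith
    have : dist (0 : ℝ) (φ ε x) = φ ε x := by
      rw [dist_comm, Real.dist_0_eq_abs, abs_of_nonneg hφnn]
    rw [Pi.zero_apply, this]
    calc φ ε x ≤ ε / (Real.pi * δ ^ 2) := hbound
      _ < η := by
        rw [div_lt_iff₀ (by positivity)]
        exact hε.2
  -- measurability
  have h'iφ : ∀ᶠ ε in nhdsWithin 0 (Set.Ioi 0),
      AEStronglyMeasurable (φ ε) (volume.restrict (Set.Ioi (0 : ℝ))) := by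
    filter_upwards [self_mem_nhdsWithin] with ε hε
    have : Continuous (φ ε) := by
      rw [hφ]
      apply continuous_const.mul
      apply continuous_const.div
      · exact ((continuous_id.sub continuous_const).pow 2).add continuous_const
      · intro x
        have hε0 : (0 : ℝ) < ε := hε
        positivity
    exact this.aestronglyMeasurable
  -- integrability of G on (0, ∞)
  have hmg : IntegrableOn G (Set.Ioi (0 : ℝ)) := by
    obtain ⟨R, hR⟩ := hsupp.isBounded.subset_closedBall 0
    rw [Real.closedBall_eq_Icc, zero_sub, zero_add] at hR
    have hIcc : IntegrableOn G (Set.Icc (Real.exp (-R)) (Real.exp R)) := by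
      apply ContinuousOn.integrableOn_compact isCompact_Icc
      apply continuousOn_const.mul
      apply hg.comp_continuousOn (Real.continuousOn_log.mono ?_)
      intro x hx
      exact ne_of_gt (lt_of_lt_of_le (Real.exp_pos _) hx.1)
    have hEq : Set.EqOn G 0 (Set.Ioi 0 \ Set.Icc (Real.exp (-R)) (Real.exp R)) := by
      intro x hx
      have hx0 : (0 : ℝ) < x := hx.1
      have hlog : Real.log x ∉ tsupport g := by
        intro hmem
        have h1 := hR hmem
        apply hx.2
        constructor
        · calc Real.exp (-R) ≤ Real.exp (Real.log x) := Real.exp_le_exp.2 h1.1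
            _ = x := Real.exp_log hx0
        · calc x = Real.exp (Real.log x) := (Real.exp_log hx0).symm
            _ ≤ Real.exp R := Real.exp_le_exp.2 h1.2
      have : g (Real.log x) = 0 := image_eq_zero_of_notMem_tsupport hlog
      rw [hG]
      simp [this]
    have hzero : IntegrableOn G (Set.Ioi 0 \ Set.Icc (Real.exp (-R)) (Real.exp R)) := by
      rw [integrableOn_congr_fun hEq (measurableSet_Ioi.diff measurableSet_Icc)]
      exact integrableOn_zero
    apply (hIcc.union hzero).mono_set
    intro x hx
    by_cases h : x ∈ Set.Icc (Real.exp (-R)) (Real.exp R)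
    · exact Set.mem_union_left _ h
    · exact Set.mem_union_right _ ⟨hx, h⟩
  -- continuity of G at b within (0, ∞)
  have hcg : Tendsto G (nhdsWithin b (Set.Ioi 0)) (nhds (2 * Real.pi * Complex.I * g a)) := by
    have hcont : ContinuousAt G b := by
      rw [hG]
      exact continuousAt_const.mul (hg.continuousAt.comp (Real.continuousAt_log hb.ne'))
    have hGb : G b = 2 * Real.pi * Complex.I * g a := by
      rw [hG]
      simp [hb_def, Real.log_exp]
    rw [← hGb]
    exact hcont.continuousWithinAt
  -- apply the peak function theorem
  have main : Tendsto (fun ε : ℝ => ∫ u in Set.Ioi (0 : ℝ), φ ε u • G u)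
      (nhdsWithin 0 (Set.Ioi 0)) (nhds (2 * Real.pi * Complex.I * g a)) := by
    apply tendsto_setIntegral_peak_smul_of_integrableOn_of_tendsto measurableSet_Ioi
      measurableSet_Ioo ?hts ?h'ts ?h't ?hnφ hlφ hiφ h'iφ hmg hcg
    case hts =>
      intro x hx
      exact lt_trans (by positivity) hx.1
    case h'ts =>
      apply mem_nhdsWithin_of_mem_nhds
      apply isOpen_Ioo.mem_nhds
      constructor <;> [linarith; linarith]
    case h't => exact measure_Ioo_lt_top.ne
    case hnφ =>
      filter_upwards [self_mem_nhdsWithin] with ε hε x _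
      have hε0 : (0 : ℝ) < ε := hε
      rw [hφ]
      positivity
  apply main.congr'
  filter_upwards [self_mem_nhdsWithin] with ε hε
  exact (key ε hε).symm
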